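/- arXiv:2410.06394 — 6 statements merged into one kernel-verified Lean document; each statement's English description precedes it below -/
import Mathlib

section
/- Let M₁, M₂, J be mutually independent real-valued random variables on a probability space, where M₁ and M₂ are identically distributed with mean μ_m ≠ 0 and variance σ_m² > 0, and J has mean μ and variance σ² > 0 (all second moments finite). Then the Pearson correlation coefficient of the random variables M₁·J and M₂·J equals (1 + (σ_m²/μ_m²)·(1 + μ²/σ²))⁻¹. Equivalently, Cov(M₁J, M₂J) = μ_m²·σ² and Var(M₁J) = Var(M₂J) = σ_m²σ² + σ_m²μ² + μ_m²σ², so the correlation is μ_m²σ² / (σ_m²σ² + σ_m²μ² + μ_m²σ²). -/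
open MeasureTheory ProbabilityTheory

lemma iIndepFun_congr_ae {Ω : Type*} [MeasurableSpace Ω] {μ : Measure Ω}
    {ι : Type*} {β : ι → Type*} [m : ∀ i, MeasurableSpace (β i)]
    {f f' : ∀ i, Ω → β i} (hf : iIndepFun f μ) (h : ∀ i, f i =ᵐ[μ] f' i) :
    iIndepFun f' μ := by
  rw [iIndepFun_iff_measure_inter_preimage_eq_mul] at hf ⊢
  intro S sets H
  have hae : ∀ᵐ ω ∂μ, ∀ i ∈ S, f i ω = f' i ω :=
    (Filter.eventually_all_finset S).2 fun i _ => h i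
  have h1 : ∀ i ∈ S, μ (f' i ⁻¹' sets i) = μ (f i ⁻¹' sets i) := by
    intro i hi
    refine measure_congr (Filter.eventuallyEq_set.2 ?_)
    filter_upwards [h i] with ω hω
    simp [Set.mem_preimage, hω]
  have h2 : μ (⋂ i ∈ S, f' i ⁻¹' sets i) = μ (⋂ i ∈ S, f i ⁻¹' sets i) := by
    refine measure_congr (Filter.eventuallyEq_set.2 ?_)
    filter_upwards [hae] with ω hω
    simp only [Set.mem_iInter, Set.mem_preimage]
    constructor
    · intro H i hi; rw [hω i hi]; exact H i hi
    · intro H i hi; rw [← hω i hi]; exact H i hi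
  rw [h2, hf S H]
  exact Finset.prod_congr rfl fun i hi => (h1 i hi).symm

/-- Correlation between the weights `M₁·J` and `M₂·J` of two components of a Compound Random
Measure, where the i.i.d. scores `M₁, M₂` and the jump `J` are mutually independent:
`Cov(M₁J, M₂J) = μₘ²σ²`, `Var(M₁J) = Var(M₂J) = σₘ²σ² + σₘ²μ² + μₘ²σ²`, and the Pearson
correlation equals `(1 + (σₘ²/μₘ²)(1 + μ²/σ²))⁻¹ = μₘ²σ²/(σₘ²σ² + σₘ²μ² + μₘ²σ²)`. -/
theorem corm_weights_correlation {Ω : Type*} [MeasureSpace Ω]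
    [IsProbabilityMeasure (ℙ : Measure Ω)]
    (M₁ M₂ J : Ω → ℝ)
    (hindep : iIndepFun ![M₁, M₂, J] ℙ)
    (hid : IdentDistrib M₁ M₂ ℙ ℙ)
    (hM₁ : MemLp M₁ 2 ℙ) (hM₂ : MemLp M₂ 2 ℙ) (hJ : MemLp J 2 ℙ)
    (μm σm2 μ σ2 : ℝ)
    (hμm : μm = ∫ ω, M₁ ω ∂ℙ) (hμm0 : μm ≠ 0)
    (hσm2 : σm2 = variance M₁ ℙ) (hσm2pos : 0 < σm2)
    (hμ : μ = ∫ ω, J ω ∂ℙ)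
    (hσ2 : σ2 = variance J ℙ) (hσ2pos : 0 < σ2) :
    (∫ ω, (M₁ ω * J ω) * (M₂ ω * J ω) ∂ℙ) -
        (∫ ω, M₁ ω * J ω ∂ℙ) * (∫ ω, M₂ ω * J ω ∂ℙ) = μm ^ 2 * σ2 ∧
      variance (fun ω => M₁ ω * J ω) ℙ = σm2 * σ2 + σm2 * μ ^ 2 + μm ^ 2 * σ2 ∧
      variance (fun ω => M₂ ω * J ω) ℙ = σm2 * σ2 + σm2 * μ ^ 2 + μm ^ 2 * σ2 ∧
      ((∫ ω, (M₁ ω * J ω) * (M₂ ω * J ω) ∂ℙ) -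
          (∫ ω, M₁ ω * J ω ∂ℙ) * (∫ ω, M₂ ω * J ω ∂ℙ)) /
          (Real.sqrt (variance (fun ω => M₁ ω * J ω) ℙ) *
            Real.sqrt (variance (fun ω => M₂ ω * J ω) ℙ)) =
        (1 + σm2 / μm ^ 2 * (1 + μ ^ 2 / σ2))⁻¹ ∧
      (1 + σm2 / μm ^ 2 * (1 + μ ^ 2 / σ2))⁻¹ =
        μm ^ 2 * σ2 / (σm2 * σ2 + σm2 * μ ^ 2 + μm ^ 2 * σ2) := by
  -- measurable modifications
  set M₁' := hM₁.1.mk M₁ with hM₁'def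
  set M₂' := hM₂.1.mk M₂ with hM₂'def
  set J' := hJ.1.mk J with hJ'def
  have haeM₁ : M₁ =ᵐ[ℙ] M₁' := hM₁.1.ae_eq_mk
  have haeM₂ : M₂ =ᵐ[ℙ] M₂' := hM₂.1.ae_eq_mk
  have haeJ : J =ᵐ[ℙ] J' := hJ.1.ae_eq_mk
  have hindep' : iIndepFun ![M₁', M₂', J'] ℙ := by
    refine iIndepFun_congr_ae hindep fun i => ?_
    fin_cases i
    · simpa using haeM₁
    · simpa using haeM₂
    · simpa using haeJ
  have hmeas : ∀ i, Measurable (![M₁', M₂', J'] i) := by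
    intro i
    fin_cases i
    · exact hM₁.1.stronglyMeasurable_mk.measurable
    · exact hM₂.1.stronglyMeasurable_mk.measurable
    · exact hJ.1.stronglyMeasurable_mk.measurable
  -- independence facts
  have hIndMM : IndepFun M₁ M₂ ℙ := hindep.indepFun (show (0 : Fin 3) ≠ 1 by decide)
  have hIndM₁J : IndepFun M₁ J ℙ := hindep.indepFun (show (0 : Fin 3) ≠ 2 by decide)
  have hIndM₂J : IndepFun M₂ J ℙ := hindep.indepFun (show (1 : Fin 3) ≠ 2 by decide)
  have hsqmeas : Measurable fun x : ℝ => x ^ 2 := measurable_id.pow_const 2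
  have hIndMMJsq : IndepFun (fun ω => M₁ ω * M₂ ω) (fun ω => J ω ^ 2) ℙ := by
    have h1 : IndepFun (M₁' * M₂') J' ℙ :=
      hindep'.indepFun_mul_left hmeas 0 1 2 (by decide) (by decide)
    have h2 : IndepFun (M₁' * M₂') (fun ω => J' ω ^ 2) ℙ :=
      h1.comp measurable_id hsqmeas
    refine h2.congr ?_ ?_
    · filter_upwards [haeM₁, haeM₂] with ω h1 h2
      simp [Pi.mul_apply, ← h1, ← h2]
    · filter_upwards [haeJ] with ω h1
      rw [← h1]
  have hIndM₁sqJsq : IndepFun (fun ω => M₁ ω ^ 2) (fun ω => J ω ^ 2) ℙ :=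
    hIndM₁J.comp hsqmeas hsqmeas
  have hIndM₂sqJsq : IndepFun (fun ω => M₂ ω ^ 2) (fun ω => J ω ^ 2) ℙ :=
    hIndM₂J.comp hsqmeas hsqmeas
  -- integrability
  have intM₁ : Integrable M₁ ℙ := hM₁.integrable (by norm_num)
  have intM₂ : Integrable M₂ ℙ := hM₂.integrable (by norm_num)
  have intJ : Integrable J ℙ := hJ.integrable (by norm_num)
  have intM₁sq : Integrable (fun ω => M₁ ω ^ 2) ℙ :=
    (memLp_two_iff_integrable_sq hM₁.1).1 hM₁
  have intM₂sq : Integrable (fun ω => M₂ ω ^ 2) ℙ :=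
    (memLp_two_iff_integrable_sq hM₂.1).1 hM₂
  have intJsq : Integrable (fun ω => J ω ^ 2) ℙ :=
    (memLp_two_iff_integrable_sq hJ.1).1 hJ
  -- moments
  set e1 : ℝ := ∫ ω, M₁ ω ∂ℙ with he1
  set eJ : ℝ := ∫ ω, J ω ∂ℙ with heJ
  set e1sq : ℝ := ∫ ω, M₁ ω ^ 2 ∂ℙ with he1sq
  set eJsq : ℝ := ∫ ω, J ω ^ 2 ∂ℙ with heJsq
  have hidsq : IdentDistrib (fun ω => M₁ ω ^ 2) (fun ω => M₂ ω ^ 2) ℙ ℙ :=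
    hid.comp hsqmeas
  have he2 : (∫ ω, M₂ ω ∂ℙ) = e1 := (hid.integral_eq).symm
  have he2sq : (∫ ω, M₂ ω ^ 2 ∂ℙ) = e1sq := (hidsq.integral_eq).symm
  -- mean of products
  have hmean1 : (∫ ω, M₁ ω * J ω ∂ℙ) = e1 * eJ := by
    have := hIndM₁J.integral_mul_eq_mul_integral hM₁.1 hJ.1
    simpa [Pi.mul_apply] using this
  have hmean2 : (∫ ω, M₂ ω * J ω ∂ℙ) = e1 * eJ := by
    have := hIndM₂J.integral_mul_eq_mul_integral hM₂.1 hJ.1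
    simpa [Pi.mul_apply, he2] using this
  have hmeanMM : (∫ ω, M₁ ω * M₂ ω ∂ℙ) = e1 * e1 := by
    have := hIndMM.integral_mul_eq_mul_integral hM₁.1 hM₂.1
    simpa [Pi.mul_apply, he2] using this
  have hcross : (∫ ω, (M₁ ω * J ω) * (M₂ ω * J ω) ∂ℙ) = e1 * e1 * eJsq := by
    have hre : (fun ω => (M₁ ω * J ω) * (M₂ ω * J ω))
        = fun ω => (M₁ ω * M₂ ω) * (J ω ^ 2) := by funext ω; ring
    rw [hre]
    have := hIndMMJsq.integral_mul_eq_mul_integral (hM₁.1.mul hM₂.1) (hJ.1.pow 2)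
    simpa [Pi.mul_apply, hmeanMM] using this
  -- second moments of products
  have hsq1 : (∫ ω, (M₁ ω * J ω) ^ 2 ∂ℙ) = e1sq * eJsq := by
    have hre : (fun ω => (M₁ ω * J ω) ^ 2) = fun ω => (M₁ ω ^ 2) * (J ω ^ 2) := by
      funext ω; ring
    rw [hre]
    have := hIndM₁sqJsq.integral_mul_eq_mul_integral (hM₁.1.pow 2) (hJ.1.pow 2)
    simpa [Pi.mul_apply] using this
  have hsq2 : (∫ ω, (M₂ ω * J ω) ^ 2 ∂ℙ) = e1sq * eJsq := by
    have hre : (fun ω => (M₂ ω * J ω) ^ 2) = fun ω => (M₂ ω ^ 2) * (J ω ^ 2) := by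
      funext ω; ring
    rw [hre]
    have := hIndM₂sqJsq.integral_mul_eq_mul_integral (hM₂.1.pow 2) (hJ.1.pow 2)
    simpa [Pi.mul_apply, he2sq] using this
  -- Memℒp of products
  have hL2_1 : MemLp (fun ω => M₁ ω * J ω) 2 ℙ := by
    refine (memLp_two_iff_integrable_sq (hM₁.1.mul hJ.1)).2 ?_
    simpa only [Pi.mul_apply, Pi.mul_def, mul_pow] using hIndM₁sqJsq.integrable_mul intM₁sq intJsq
  have hL2_2 : MemLp (fun ω => M₂ ω * J ω) 2 ℙ := by
    refine (memLp_two_iff_integrable_sq (hM₂.1.mul hJ.1)).2 ?_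
    simpa only [Pi.mul_apply, Pi.mul_def, mul_pow] using hIndM₂sqJsq.integrable_mul intM₂sq intJsq
  -- relate given parameters to raw moments
  have hvarM₁ : σm2 = e1sq - e1 ^ 2 := by
    rw [hσm2, variance_eq_sub hM₁]
    simp only [Pi.pow_apply]
    rfl
  have hvarJ : σ2 = eJsq - eJ ^ 2 := by
    rw [hσ2, variance_eq_sub hJ]
    simp only [Pi.pow_apply]
    rfl
  have hμm' : μm = e1 := hμm
  have hμ' : μ = eJ := hμ
  -- covariance
  have hcov : (∫ ω, (M₁ ω * J ω) * (M₂ ω * J ω) ∂ℙ) -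
      (∫ ω, M₁ ω * J ω ∂ℙ) * (∫ ω, M₂ ω * J ω ∂ℙ) = μm ^ 2 * σ2 := by
    rw [hcross, hmean1, hmean2, hμm', hvarJ]; ring
  -- variances
  have hvar1 : variance (fun ω => M₁ ω * J ω) ℙ
      = σm2 * σ2 + σm2 * μ ^ 2 + μm ^ 2 * σ2 := by
    rw [variance_eq_sub hL2_1]
    simp only [Pi.pow_apply]
    rw [hsq1, hmean1, hvarM₁, hvarJ, hμm', hμ']; ring
  have hvar2 : variance (fun ω => M₂ ω * J ω) ℙ
      = σm2 * σ2 + σm2 * μ ^ 2 + μm ^ 2 * σ2 := by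
    rw [variance_eq_sub hL2_2]
    simp only [Pi.pow_apply]
    rw [hsq2, hmean2, hvarM₁, hvarJ, hμm', hμ']; ring
  -- final algebra
  have hμm2 : μm ^ 2 ≠ 0 := pow_ne_zero 2 hμm0
  have hVpos : (0:ℝ) < σm2 * σ2 + σm2 * μ ^ 2 + μm ^ 2 * σ2 := by positivity
  have halg : (1 + σm2 / μm ^ 2 * (1 + μ ^ 2 / σ2))⁻¹ =
      μm ^ 2 * σ2 / (σm2 * σ2 + σm2 * μ ^ 2 + μm ^ 2 * σ2) := by
    have hσ2ne : σ2 ≠ 0 := hσ2pos.ne'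
    have hVne : σm2 * σ2 + σm2 * μ ^ 2 + μm ^ 2 * σ2 ≠ 0 := hVpos.ne'
    field_simp
    ring
  refine ⟨hcov, hvar1, hvar2, ?_, halg⟩
  rw [hcov, hvar1, hvar2, Real.mul_self_sqrt hVpos.le, halg]
end

section
/- For all real numbers s > 0, φ > 0 and σ ∈ (0,1), the following integral identity holds: ∫₀^∞ z⁻¹ · (Γ(φ))⁻¹ (s/z)^{φ−1} e^{−s/z} · (σ Γ(φ) / (Γ(σ+φ) Γ(1−σ))) · z^{−1−σ} dz = σ s^{−1−σ} / Γ(1−σ). (This shows that a Compound Random Measure with Gamma(φ,1)-distributed scores and σ-stable directing Lévy measure ν*(dz) = (σΓ(φ)/(Γ(σ+φ)Γ(1−σ))) z^{−1−σ} dz has σ-stable marginal Lévy intensities.) -/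
open MeasureTheory Real

lemma key_inv_integral (a : ℝ) (ha : 0 < a) :
    ∫ x in Set.Ioi (0 : ℝ), x ^ (-a - 1) * Real.exp (-(1 / x)) = Real.Gamma a := by
  have h := MeasureTheory.integral_comp_rpow_Ioi
    (fun y : ℝ => Real.exp (-y) * y ^ (a - 1)) (p := (-1 : ℝ)) (by norm_num)
  rw [Real.Gamma_eq_integral ha, ← h]
  refine setIntegral_congr_fun measurableSet_Ioi fun x hx => ?_
  have hx0 : (0 : ℝ) < x := hx
  have hxne : x ≠ 0 := hx0.ne'
  simp only [smul_eq_mul, abs_neg, abs_one]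
  have hexp : (-a - 1 : ℝ) = (-1 - 1) + (-(a - 1)) := by ring
  rw [one_mul, Real.rpow_neg_one x, Real.inv_rpow hx0.le, ← Real.rpow_neg hx0.le, one_div,
    mul_comm (Real.exp (-x⁻¹)), ← mul_assoc, ← Real.rpow_add hx0, ← hexp]

lemma key_scaled_integral (s a : ℝ) (hs : 0 < s) (ha : 0 < a) :
    ∫ z in Set.Ioi (0 : ℝ), z ^ (-a - 1) * Real.exp (-(s / z)) =
      s ^ (-a) * Real.Gamma a := by
  have h := MeasureTheory.integral_comp_mul_left_Ioi
    (fun z : ℝ => z ^ (-a - 1) * Real.exp (-(s / z))) 0 hs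
  rw [mul_zero] at h
  have h2 : ∫ x in Set.Ioi (0 : ℝ),
      (fun z : ℝ => z ^ (-a - 1) * Real.exp (-(s / z))) (s * x)
      = s ^ (-a - 1) * Real.Gamma a := by
    rw [← key_inv_integral a ha, ← integral_const_mul]
    refine setIntegral_congr_fun measurableSet_Ioi fun x hx => ?_
    have hx0 : (0 : ℝ) < x := hx
    simp only
    rw [Real.mul_rpow hs.le hx0.le, div_mul_eq_div_div, div_self hs.ne']
    ring
  rw [h2] at h
  have := h.symm
  rw [smul_eq_mul] at h
  have hres : ∫ z in Set.Ioi (0:ℝ), z ^ (-a - 1) * Real.exp (-(s / z))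
      = s * (s ^ (-a - 1) * Real.Gamma a) := by
    field_simp at h ⊢
    linarith [h]
  rw [hres, show s * (s ^ (-a - 1) * Real.Gamma a) = s ^ (1:ℝ) * s ^ (-a - 1) * Real.Gamma a by
    rw [Real.rpow_one]; ring, ← Real.rpow_add hs]
  norm_num

/-- A Compound Random Measure with Gamma(φ,1)-distributed scores and σ-stable directing
Lévy measure has σ-stable marginal Lévy intensities. -/
theorem corm_gamma_stable_marginal_intensity (s φ σ : ℝ) (hs : 0 < s) (hφ : 0 < φ)
    (hσ : σ ∈ Set.Ioo (0 : ℝ) 1) :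
    ∫ z in Set.Ioi (0 : ℝ),
        z⁻¹ * ((Real.Gamma φ)⁻¹ * (s / z) ^ (φ - 1) * Real.exp (-(s / z))) *
          (σ * Real.Gamma φ / (Real.Gamma (σ + φ) * Real.Gamma (1 - σ)) * z ^ (-1 - σ)) =
      σ * s ^ (-1 - σ) / Real.Gamma (1 - σ) := by
  obtain ⟨hσ0, hσ1⟩ := hσ
  have hsum : 0 < σ + φ := by linarith
  have hΓφ : 0 < Real.Gamma φ := Real.Gamma_pos_of_pos hφ
  have hΓs : 0 < Real.Gamma (σ + φ) := Real.Gamma_pos_of_pos hsum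
  have hΓ1 : 0 < Real.Gamma (1 - σ) := Real.Gamma_pos_of_pos (by linarith)
  set C : ℝ := (Real.Gamma φ)⁻¹ * (σ * Real.Gamma φ / (Real.Gamma (σ + φ) * Real.Gamma (1 - σ)))
    * s ^ (φ - 1) with hC
  have hcong : ∫ z in Set.Ioi (0 : ℝ),
        z⁻¹ * ((Real.Gamma φ)⁻¹ * (s / z) ^ (φ - 1) * Real.exp (-(s / z))) *
          (σ * Real.Gamma φ / (Real.Gamma (σ + φ) * Real.Gamma (1 - σ)) * z ^ (-1 - σ))
      = ∫ z in Set.Ioi (0 : ℝ), C * (z ^ (-(σ + φ) - 1) * Real.exp (-(s / z))) := by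
    refine setIntegral_congr_fun measurableSet_Ioi fun z hz => ?_
    have hz0 : (0 : ℝ) < z := hz
    rw [Real.div_rpow hs.le hz0.le, hC, div_eq_mul_inv (s ^ (φ - 1)),
      ← Real.rpow_neg hz0.le, ← Real.rpow_neg_one z]
    have hz' : z ^ (-(σ + φ) - 1) = z ^ (-1 : ℝ) * z ^ (-(φ - 1)) * z ^ (-1 - σ) := by
      rw [← Real.rpow_add hz0, ← Real.rpow_add hz0]; congr 1; ring
    rw [hz']; ring
  rw [hcong, integral_const_mul, key_scaled_integral s (σ + φ) hs hsum]
  rw [hC]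
  have hpow : s ^ (φ - 1) * s ^ (-(σ + φ)) = s ^ (-1 - σ) := by
    rw [← Real.rpow_add hs]; congr 1; ring
  have hstep : (Real.Gamma φ)⁻¹ * (σ * Real.Gamma φ / (Real.Gamma (σ + φ) * Real.Gamma (1 - σ)))
      * s ^ (φ - 1) * (s ^ (-(σ + φ)) * Real.Gamma (σ + φ))
      = σ * (s ^ (φ - 1) * s ^ (-(σ + φ))) / Real.Gamma (1 - σ) := by
    field_simp
  rw [hstep, hpow]
end

section
/- For every σ ∈ (0,1), the function T_σ : (0,∞) → ℝ defined by T_σ(φ) = −ψ(φ) + (1/σ)·(log Γ(φ+σ) − log Γ(φ)) is strictly decreasing on (0,∞). -/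
open Real Filter

noncomputable def KLpsi (x : ℝ) : ℝ := deriv (fun t : ℝ => Real.log (Real.Gamma t)) x

noncomputable def KLT (σ φ : ℝ) : ℝ :=
  -KLpsi φ + (1 / σ) * (Real.log (Real.Gamma (φ + σ)) - Real.log (Real.Gamma φ))

noncomputable def KLg (σ t : ℝ) : ℝ := 1 / t - (1 / σ) * (Real.log (t + σ) - Real.log t)

lemma KL_ne_neg_nat {x : ℝ} (hx : 0 < x) : ∀ m : ℕ, x ≠ -m := by
  intro m h
  have : (0:ℝ) ≤ (m:ℝ) := Nat.cast_nonneg m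
  linarith [h ▸ hx]

lemma KL_diffAt {x : ℝ} (hx : 0 < x) :
    DifferentiableAt ℝ (fun t : ℝ => Real.log (Real.Gamma t)) x :=
  (Real.differentiableAt_Gamma (KL_ne_neg_nat hx)).log (Real.Gamma_pos_of_pos hx).ne'

lemma KL_hasDerivAt {x : ℝ} (hx : 0 < x) :
    HasDerivAt (fun t : ℝ => Real.log (Real.Gamma t)) (KLpsi x) x :=
  (KL_diffAt hx).hasDerivAt

lemma KL_logGamma_rec {t : ℝ} (ht : 0 < t) :
    Real.log (Real.Gamma (t + 1)) = Real.log t + Real.log (Real.Gamma t) := by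
  rw [Real.Gamma_add_one ht.ne', Real.log_mul ht.ne' (Real.Gamma_pos_of_pos ht).ne']

lemma KLpsi_rec {x : ℝ} (hx : 0 < x) : KLpsi (x + 1) = 1 / x + KLpsi x := by
  have h1 : HasDerivAt (fun t : ℝ => Real.log (Real.Gamma (t + 1))) (KLpsi (x + 1)) x := by
    have := (KL_hasDerivAt (by linarith : (0:ℝ) < x + 1)).comp x
      ((hasDerivAt_id x).add_const 1)
    simp at this; exact this
  have h2 : HasDerivAt (fun t : ℝ => Real.log t + Real.log (Real.Gamma t))
      (1 / x + KLpsi x) x := by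
    rw [one_div]; exact (Real.hasDerivAt_log hx.ne').add (KL_hasDerivAt hx)
  have heq : (fun t : ℝ => Real.log (Real.Gamma (t + 1)))
      =ᶠ[nhds x] (fun t : ℝ => Real.log t + Real.log (Real.Gamma t)) := by
    filter_upwards [eventually_gt_nhds hx] with t ht
    exact KL_logGamma_rec ht
  exact (h1.congr_of_eventuallyEq heq.symm).unique h2

lemma KLT_rec {σ φ : ℝ} (hσ : 0 < σ) (hφ : 0 < φ) :
    KLT σ φ = KLg σ φ + KLT σ (φ + 1) := by
  have e1 := KL_logGamma_rec hφ
  have e2 := KL_logGamma_rec (by linarith : (0:ℝ) < φ + σ)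
  have e3 := KLpsi_rec hφ
  have e4 : φ + 1 + σ = (φ + σ) + 1 := by ring
  simp only [KLT, KLg, e4, e2, e1, e3]
  field_simp
  ring

lemma KLT_telescope {σ φ : ℝ} (hσ : 0 < σ) (hφ : 0 < φ) (n : ℕ) :
    KLT σ φ = (∑ k ∈ Finset.range n, KLg σ (φ + k)) + KLT σ (φ + n) := by
  induction n with
  | zero => simp
  | succ n ih =>
    rw [ih, Finset.sum_range_succ]
    have h := KLT_rec hσ (by positivity : (0:ℝ) < φ + n)
    have : φ + (n + 1 : ℕ) = (φ + n) + 1 := by push_cast; ring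
    rw [this, h]
    ring

lemma KL_convex : ConvexOn ℝ (Set.Ioi 0) (fun t : ℝ => Real.log (Real.Gamma t)) := by
  simpa [Function.comp_def] using Real.convexOn_log_Gamma

lemma KLpsi_le_slope {x y : ℝ} (hx : 0 < x) (hxy : x < y) :
    KLpsi x ≤ (Real.log (Real.Gamma y) - Real.log (Real.Gamma x)) / (y - x) := by
  have := KL_convex.le_slope_of_hasDerivAt (Set.mem_Ioi.mpr hx)
    (Set.mem_Ioi.mpr (hx.trans hxy)) hxy (KL_hasDerivAt hx)
  rwa [slope_def_field] at this

lemma slope_le_KLpsi {x y : ℝ} (hx : 0 < x) (hxy : x < y) :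
    (Real.log (Real.Gamma y) - Real.log (Real.Gamma x)) / (y - x) ≤ KLpsi y := by
  have := KL_convex.slope_le_of_hasDerivAt (Set.mem_Ioi.mpr hx)
    (Set.mem_Ioi.mpr (hx.trans hxy)) hxy (KL_hasDerivAt (hx.trans hxy))
  rwa [slope_def_field] at this

lemma KLT_nonneg {σ φ : ℝ} (hσ : 0 < σ) (hφ : 0 < φ) : 0 ≤ KLT σ φ := by
  have h := KLpsi_le_slope hφ (by linarith : φ < φ + σ)
  have hs : φ + σ - φ = σ := by ring
  rw [hs] at h
  have : KLpsi φ ≤ (1 / σ) * (Real.log (Real.Gamma (φ + σ)) - Real.log (Real.Gamma φ)) := by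
    rw [one_div, inv_mul_eq_div]; exact h
  simp only [KLT]; linarith

lemma KLT_le {σ φ : ℝ} (hσ : 0 < σ) (hφ : 1 < φ) :
    KLT σ φ ≤ Real.log (φ + σ) - Real.log (φ - 1) := by
  have hφ0 : 0 < φ := by linarith
  have hφσ : 0 < φ + σ := by linarith
  -- slope over [φ, φ+σ] ≤ ψ(φ+σ)
  have h1 := slope_le_KLpsi hφ0 (by linarith : φ < φ + σ)
  have hs : φ + σ - φ = σ := by ring
  rw [hs] at h1
  -- ψ(φ+σ) ≤ log(φ+σ) : slope over [φ+σ, φ+σ+1]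
  have h2 : KLpsi (φ + σ) ≤ Real.log (φ + σ) := by
    have := KLpsi_le_slope hφσ (by linarith : φ + σ < φ + σ + 1)
    rwa [KL_logGamma_rec hφσ, show φ + σ + 1 - (φ + σ) = 1 by ring, div_one,
      add_sub_cancel_right] at this
  -- log(φ-1) ≤ ψ(φ)
  have h3 : Real.log (φ - 1) ≤ KLpsi φ := by
    have hφ1 : 0 < φ - 1 := by linarith
    have e : Real.log (Real.Gamma φ) = Real.log (φ - 1) + Real.log (Real.Gamma (φ - 1)) := by
      have := KL_logGamma_rec hφ1
      rwa [sub_add_cancel] at this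
    have key := slope_le_KLpsi hφ1 (by linarith : φ - 1 < φ)
    rw [show φ - (φ - 1) = 1 by ring, div_one, e] at key
    linarith
  have : (1 / σ) * (Real.log (Real.Gamma (φ + σ)) - Real.log (Real.Gamma φ)) ≤
      KLpsi (φ + σ) := by
    rw [one_div, inv_mul_eq_div]; exact h1
  simp only [KLT]; linarith

lemma KLg_nonneg {σ t : ℝ} (hσ : 0 < σ) (ht : 0 < t) : 0 ≤ KLg σ t := by
  have h1 : Real.log (t + σ) - Real.log t = Real.log ((t + σ) / t) := by
    rw [Real.log_div (by linarith) ht.ne']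
  have h2 : Real.log ((t + σ) / t) ≤ (t + σ) / t - 1 :=
    Real.log_le_sub_one_of_pos (by positivity)
  have h3 : (t + σ) / t - 1 = σ / t := by field_simp; ring
  have h4 : (1 / σ) * (Real.log (t + σ) - Real.log t) ≤ (1 / σ) * (σ / t) := by
    apply mul_le_mul_of_nonneg_left _ (by positivity)
    rw [h1]; linarith [h2.trans_eq h3]
  have h5 : (1 / σ) * (σ / t) = 1 / t := by field_simp
  simp only [KLg]; linarith [h4.trans_eq h5]

lemma KLg_hasDerivAt {σ t : ℝ} (hσ : 0 < σ) (ht : 0 < t) :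
    HasDerivAt (KLg σ) (-(t ^ 2)⁻¹ - (1 / σ) * (1 / (t + σ) - 1 / t)) t := by
  have h1 : HasDerivAt (fun u : ℝ => Real.log (u + σ)) (1 / (t + σ)) t := by
    have := (((hasDerivAt_id t).add_const σ).log (by linarith : t + σ ≠ 0))
    simpa [one_div] using this
  have h2 : HasDerivAt (fun u : ℝ => Real.log u) (1 / t) t := by
    simpa [one_div] using Real.hasDerivAt_log ht.ne'
  have h3 : HasDerivAt (fun u : ℝ => 1 / u) (-(t ^ 2)⁻¹) t := by
    simpa [one_div] using hasDerivAt_inv ht.ne'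
  have H := h3.sub ((h1.sub h2).const_mul (1 / σ))
  exact H

lemma KLg_strictAnti {σ : ℝ} (hσ : 0 < σ) : StrictAntiOn (KLg σ) (Set.Ioi 0) := by
  apply strictAntiOn_of_deriv_neg (convex_Ioi 0)
  · intro t ht
    exact ((KLg_hasDerivAt hσ (Set.mem_Ioi.mp ht)).differentiableAt).continuousAt.continuousWithinAt
  · intro t ht
    rw [interior_Ioi] at ht
    have ht' : (0:ℝ) < t := Set.mem_Ioi.mp ht
    rw [(KLg_hasDerivAt hσ ht').deriv]
    have key : (1 / σ) * (1 / t - 1 / (t + σ)) < (t ^ 2)⁻¹ := by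
      have e : 1 / t - 1 / (t + σ) = σ / (t * (t + σ)) := by
        field_simp
        ring
      rw [e]
      have e2 : (1 / σ) * (σ / (t * (t + σ))) = 1 / (t * (t + σ)) := by field_simp
      rw [e2]
      rw [one_div, inv_lt_inv₀ (by positivity) (by positivity)]
      nlinarith
    linarith

lemma KLT_tendsto {σ φ : ℝ} (hσ : 0 < σ) (hφ : 0 < φ) :
    Tendsto (fun n : ℕ => KLT σ (φ + n)) atTop (nhds 0) := by
  have hbound : ∀ n : ℕ, 1 ≤ n → KLT σ (φ + n) ≤ (σ + 1) / (φ + n - 1) := by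
    intro n hn
    have hn1 : (1:ℝ) ≤ n := by exact_mod_cast hn
    have h1 : 1 < φ + n := by linarith
    have h2 := KLT_le hσ h1
    have hd : 0 < φ + (n:ℝ) - 1 := by linarith
    have h3 : Real.log (φ + n + σ) - Real.log (φ + n - 1) ≤ (σ + 1) / (φ + n - 1) := by
      rw [← Real.log_div (by linarith) (by linarith)]
      have := Real.log_le_sub_one_of_pos (show (0:ℝ) < (φ + n + σ) / (φ + n - 1) by positivity)
      have e : (φ + ↑n + σ) / (φ + ↑n - 1) - 1 = (σ + 1) / (φ + ↑n - 1) := by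
        field_simp
        ring
      linarith [this.trans_eq e]
    linarith
  have htend : Tendsto (fun n : ℕ => (σ + 1) / (φ + n - 1)) atTop (nhds 0) := by
    have h1 : Tendsto (fun n : ℕ => φ + (n:ℝ) - 1) atTop atTop := by
      apply tendsto_atTop_add_const_right
      exact tendsto_atTop_add_const_left _ φ tendsto_natCast_atTop_atTop
    have := h1.inv_tendsto_atTop.const_mul (σ + 1)
    simpa [div_eq_mul_inv] using this
  apply tendsto_of_tendsto_of_tendsto_of_le_of_le' tendsto_const_nhds htend
  · exact Eventually.of_forall fun n => KLT_nonneg hσ (by positivity)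
  · filter_upwards [eventually_ge_atTop 1] with n hn
    exact hbound n hn

lemma KLT_hasSum {σ φ : ℝ} (hσ : 0 < σ) (hφ : 0 < φ) :
    HasSum (fun k : ℕ => KLg σ (φ + k)) (KLT σ φ) := by
  rw [hasSum_iff_tendsto_nat_of_nonneg (fun k => KLg_nonneg hσ (by positivity))]
  have heq : ∀ n : ℕ, (∑ k ∈ Finset.range n, KLg σ (φ + k)) = KLT σ φ - KLT σ (φ + n) := by
    intro n
    have := KLT_telescope hσ hφ n
    linarith
  simp only [heq]
  have := tendsto_const_nhds (x := KLT σ φ) (f := atTop (α := ℕ)) |>.sub (KLT_tendsto hσ hφ)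
  simpa using this

/-- For σ ∈ (0,1), the expected Kullback–Leibler divergence
`T_σ(φ) = -ψ(φ) + (1/σ)(log Γ(φ+σ) - log Γ(φ))` is strictly decreasing on (0,∞),
where `ψ` is the digamma function. -/
theorem expected_KL_strictAnti (σ : ℝ) (hσ : σ ∈ Set.Ioo (0 : ℝ) 1) :
    StrictAntiOn
      (fun φ : ℝ =>
        -(deriv (fun t : ℝ => Real.log (Real.Gamma t)) φ) +
          (1 / σ) * (Real.log (Real.Gamma (φ + σ)) - Real.log (Real.Gamma φ)))
      (Set.Ioi 0) := by
  obtain ⟨hσ0, _⟩ := hσ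
  intro x hx y hy hxy
  have hx' : (0:ℝ) < x := hx
  have hy' : (0:ℝ) < y := hy
  show KLT σ y < KLT σ x
  refine hasSum_lt (f := fun k : ℕ => KLg σ (y + k)) (g := fun k : ℕ => KLg σ (x + k))
    (i := 0) ?_ ?_ (KLT_hasSum hσ0 hy') (KLT_hasSum hσ0 hx')
  · intro k
    exact (KLg_strictAnti hσ0 (Set.mem_Ioi.mpr (by positivity))
      (Set.mem_Ioi.mpr (by positivity)) (by linarith)).le
  · simpa using KLg_strictAnti hσ0 (Set.mem_Ioi.mpr hx') (Set.mem_Ioi.mpr hy') hxy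
end

section
/- For every σ ∈ (0,1), the function T_σ(φ) = −ψ(φ) + (1/σ)·(log Γ(φ+σ) − log Γ(φ)) tends to +∞ as φ → 0 from the right. -/
open Real Filter

private noncomputable def lG : ℝ → ℝ := fun t : ℝ => Real.log (Real.Gamma t)

private lemma lG_diff {x : ℝ} (hx : 0 < x) : DifferentiableAt ℝ lG x := by
  have h1 : ∀ m : ℕ, x ≠ -m := by
    intro m
    have : (0:ℝ) ≤ m := by positivity
    intro h; rw [h] at hx; linarith
  exact (Real.differentiableAt_Gamma h1).log (Real.Gamma_pos_of_pos hx).ne'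

private lemma lG_convex : ConvexOn ℝ (Set.Ioi 0) lG := Real.convexOn_log_Gamma

private lemma lG_two : lG 2 = 0 := by
  have : (2:ℝ) = 1 + 1 := by norm_num
  simp [lG, this, Real.Gamma_add_one (by norm_num : (1:ℝ) ≠ 0), Real.Gamma_one]

private lemma lG_three : lG 3 = Real.log 2 := by
  have h3 : (3:ℝ) = 2 + 1 := by norm_num
  have h2 : (2:ℝ) = 1 + 1 := by norm_num
  rw [lG, h3, Real.Gamma_add_one (by norm_num : (2:ℝ) ≠ 0)]
  rw [h2, Real.Gamma_add_one (by norm_num : (1:ℝ) ≠ 0), Real.Gamma_one]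
  norm_num

/-- slope from 2 to 3 bound on the derivative -/
private lemma deriv_lG_two_le : deriv lG 2 ≤ Real.log 2 := by
  have h := lG_convex.deriv_le_slope (by norm_num : (2:ℝ) ∈ Set.Ioi 0)
    (by norm_num : (3:ℝ) ∈ Set.Ioi 0) (by norm_num) (lG_diff (by norm_num))
  rw [slope_def_field, lG_two, lG_three] at h
  norm_num at h
  exact h

private lemma deriv_lG_le {x : ℝ} (hx : 0 < x) (hx2 : x ≤ 2) : deriv lG x ≤ Real.log 2 := by
  refine le_trans ?_ deriv_lG_two_le
  exact lG_convex.monotoneOn_deriv (fun y hy => lG_diff hy) hx (by norm_num) hx2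

/-- convexity: `lG ≤ 0` on `[1,2]` -/
private lemma lG_nonpos {u : ℝ} (h1 : 1 ≤ u) (h2 : u ≤ 2) : lG u ≤ 0 := by
  have := lG_convex.2 (by norm_num : (1:ℝ) ∈ Set.Ioi 0) (by norm_num : (2:ℝ) ∈ Set.Ioi 0)
    (by linarith : (0:ℝ) ≤ 2 - u) (by linarith : (0:ℝ) ≤ u - 1) (by ring)
  simp only [smul_eq_mul, lG_two] at this
  have hu : (2 - u) * 1 + (u - 1) * 2 = u := by ring
  rw [hu] at this
  have h1' : lG 1 = 0 := by simp [lG, Real.Gamma_one]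
  rw [h1'] at this; linarith

/-- lower bound `lG ≥ -2 log 2` on `(0,2)` -/
private lemma lG_lower {v : ℝ} (hv : 0 < v) (hv2 : v < 2) : -(2 * Real.log 2) ≤ lG v := by
  have h := lG_convex.slope_le_deriv (Set.mem_Ioi.mpr hv)
    (by norm_num : (2:ℝ) ∈ Set.Ioi 0) hv2 (lG_diff (by norm_num))
  rw [slope_def_field, lG_two] at h
  have h' := h.trans deriv_lG_two_le
  -- (0 - lG v)/(2 - v) ≤ log 2
  have hpos : 0 < 2 - v := by linarith
  rw [div_le_iff₀ hpos] at h'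
  have hl2 : 0 ≤ Real.log 2 := Real.log_nonneg (by norm_num)
  nlinarith [hl2, hv.le]

/-- functional equation for the derivative -/
private lemma deriv_lG_eq {φ : ℝ} (hφ : 0 < φ) : deriv lG φ = deriv lG (φ + 1) - 1 / φ := by
  have heq : (fun t => lG (t + 1) - Real.log t) =ᶠ[nhds φ] lG := by
    filter_upwards [Ioi_mem_nhds hφ] with t ht
    have ht' : (0:ℝ) < t := ht
    rw [lG, lG, Real.Gamma_add_one ht'.ne',
      Real.log_mul ht'.ne' (Real.Gamma_pos_of_pos ht').ne']
    ring
  rw [← heq.deriv_eq]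
  have h1 : HasDerivAt (fun t : ℝ => lG (t + 1)) (deriv lG (φ + 1)) φ := by
    have := ((lG_diff (by linarith : (0:ℝ) < φ + 1)).hasDerivAt.comp φ
      ((hasDerivAt_id φ).add_const 1))
    simpa [Function.comp_def] using this
  have h2 := h1.sub (Real.hasDerivAt_log hφ.ne')
  rw [show (fun t => lG (t + 1) - Real.log t) = ((fun t => lG (t + 1)) - Real.log) from rfl, h2.deriv]
  ring

/-- For σ ∈ (0,1), the expected Kullback–Leibler divergence
`T_σ(φ) = -ψ(φ) + (1/σ)(log Γ(φ+σ) - log Γ(φ))` tends to +∞ as φ → 0⁺,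
where `ψ` is the digamma function. -/
theorem expected_KL_tendsto_atTop_zero (σ : ℝ) (hσ : σ ∈ Set.Ioo (0 : ℝ) 1) :
    Tendsto
      (fun φ : ℝ =>
        -(deriv (fun t : ℝ => Real.log (Real.Gamma t)) φ) +
          (1 / σ) * (Real.log (Real.Gamma (φ + σ)) - Real.log (Real.Gamma φ)))
      (nhdsWithin 0 (Set.Ioi 0)) atTop := by
  obtain ⟨hσ0, hσ1⟩ := hσ
  -- auxiliary tendsto: (1/φ)*(1 + (1/σ)*(φ*log φ)) + C → atTop
  set C : ℝ := -Real.log 2 + (1 / σ) * (-(2 * Real.log 2)) with hC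
  have hmul : Tendsto (fun φ : ℝ => φ * Real.log φ) (nhdsWithin 0 (Set.Ioi 0)) (nhds 0) := by
    have := Real.continuous_mul_log.tendsto 0
    simpa using this.mono_left nhdsWithin_le_nhds
  have hfac : Tendsto (fun φ : ℝ => 1 + (1 / σ) * (φ * Real.log φ))
      (nhdsWithin 0 (Set.Ioi 0)) (nhds 1) := by
    have := (hmul.const_mul (1 / σ)).const_add 1
    simpa using this
  have hinv : Tendsto (fun φ : ℝ => 1 / φ) (nhdsWithin 0 (Set.Ioi 0)) atTop := by
    simpa using tendsto_inv_nhdsGT_zero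
  have hg : Tendsto (fun φ : ℝ => (1 / φ) * (1 + (1 / σ) * (φ * Real.log φ)) + C)
      (nhdsWithin 0 (Set.Ioi 0)) atTop :=
    tendsto_atTop_add_const_right _ C (hinv.atTop_mul_pos one_pos hfac)
  refine tendsto_atTop_mono' _ ?_ hg
  have hIoo : Set.Ioo (0:ℝ) 1 ∈ nhdsWithin 0 (Set.Ioi 0) := by
    rw [← Set.Ioi_inter_Iio]
    exact inter_mem_nhdsWithin _ (Iio_mem_nhds one_pos)
  filter_upwards [hIoo] with φ ⟨hφ0, hφ1⟩
  have hσinv : 0 < 1 / σ := by positivity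
  -- rewrite lower bound
  have hgφ : (1 / φ) * (1 + (1 / σ) * (φ * Real.log φ)) + C
      = 1 / φ - Real.log 2 + (1 / σ) * (-(2 * Real.log 2) + Real.log φ) := by
    have h1 : (1 / φ) * (φ * Real.log φ) = Real.log φ := by field_simp
    calc (1 / φ) * (1 + (1 / σ) * (φ * Real.log φ)) + C
        = 1 / φ + (1 / σ) * ((1 / φ) * (φ * Real.log φ)) + C := by ring
      _ = 1 / φ + (1 / σ) * Real.log φ + C := by rw [h1]
      _ = _ := by rw [hC]; ring
  rw [hgφ]
  -- bounds on the pieces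
  have hderiv : deriv (fun t : ℝ => Real.log (Real.Gamma t)) φ = deriv lG (φ + 1) - 1 / φ :=
    deriv_lG_eq hφ0
  have hd_le : deriv lG (φ + 1) ≤ Real.log 2 := deriv_lG_le (by linarith) (by linarith)
  have hlow : -(2 * Real.log 2) ≤ lG (φ + σ) := lG_lower (by linarith) (by linarith)
  have hupper : Real.log (Real.Gamma φ) ≤ -Real.log φ := by
    have : Real.log (Real.Gamma φ) = lG (φ + 1) - Real.log φ := by
      rw [lG, Real.Gamma_add_one hφ0.ne',
        Real.log_mul hφ0.ne' (Real.Gamma_pos_of_pos hφ0).ne']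
      ring
    rw [this]
    have := lG_nonpos (by linarith : (1:ℝ) ≤ φ + 1) (by linarith)
    linarith
  rw [hderiv]
  have hsum : -(2 * Real.log 2) + Real.log φ ≤
      Real.log (Real.Gamma (φ + σ)) - Real.log (Real.Gamma φ) := by
    have : Real.log (Real.Gamma (φ + σ)) = lG (φ + σ) := rfl
    rw [this]; linarith
  have hmul' := mul_le_mul_of_nonneg_left hsum hσinv.le
  linarith
end

section
/- For every real x > 0 and every σ ∈ (0,1), the digamma function satisfies the strict-concavity inequality ψ(x + σ) < ψ(x) + σ · ψ'(x), where ψ' denotes the derivative of ψ. -/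
open Real Set Filter Topology

namespace DigammaAux

noncomputable def f : ℝ → ℝ := fun t => Real.log (Real.Gamma t)

noncomputable def ψ : ℝ → ℝ := deriv f

lemma hder {x : ℝ} (hx : 0 < x) : DifferentiableAt ℝ f x := by
  refine (Real.differentiableAt_Gamma ?_).log (Real.Gamma_ne_zero ?_) <;>
  · intro m
    have : (0:ℝ) < x := hx
    have hm : -(m:ℝ) ≤ 0 := neg_nonpos.mpr (Nat.cast_nonneg m)
    linarith [hm]

lemma hc : ConvexOn ℝ (Ioi 0) f := Real.convexOn_log_Gamma

lemma h_rec {t : ℝ} (ht : 0 < t) : f (t + 1) = f t + Real.log t := by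
  simp only [f, Real.Gamma_add_one ht.ne',
    Real.log_mul ht.ne' (Real.Gamma_pos_of_pos ht).ne', add_comm]

lemma ψ_rec {x : ℝ} (hx : 0 < x) : ψ (x + 1) = ψ x + 1 / x := by
  rw [ψ, ← deriv_comp_add_const, one_div, ← Real.deriv_log,
    ← deriv_add (hder hx) (Real.differentiableAt_log hx.ne')]
  apply Filter.EventuallyEq.deriv_eq
  filter_upwards [eventually_gt_nhds hx] using fun t ht => h_rec ht

lemma ψ_add_nat {x : ℝ} (hx : 0 < x) (n : ℕ) :
    ψ (x + n) = ψ x + ∑ k ∈ Finset.range n, 1 / (x + k) := by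
  induction n with
  | zero => simp
  | succ n ih =>
    have h : x + ((n:ℕ)+1 : ℕ) = (x + n) + 1 := by push_cast; ring
    rw [h, ψ_rec (by positivity), ih, Finset.sum_range_succ]
    ring

lemma ψ_le_log {x : ℝ} (hx : 0 < x) : ψ x ≤ Real.log x := by
  have h := hc.deriv_le_slope (mem_Ioi.2 hx)
    (mem_Ioi.2 (by linarith : (0:ℝ) < x + 1)) (by linarith) (hder hx)
  rwa [slope_def_field, show x + 1 - x = (1:ℝ) by ring, div_one, h_rec hx,
    add_sub_cancel_left] at h

lemma log_le_ψ {x : ℝ} (hx : 0 < x) : Real.log x ≤ ψ (x + 1) := by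
  have h := hc.slope_le_deriv (mem_Ioi.2 hx)
    (mem_Ioi.2 (by linarith : (0:ℝ) < x + 1)) (by linarith) (hder (by linarith))
  rwa [slope_def_field, show x + 1 - x = (1:ℝ) by ring, div_one, h_rec hx,
    add_sub_cancel_left] at h

lemma tendsto_log_add_sub (c : ℝ) :
    Tendsto (fun n : ℕ => Real.log (c + n) - Real.log n) atTop (𝓝 0) := by
  have h1 : Tendsto (fun n : ℕ => c / n + 1) atTop (𝓝 1) := by
    simpa using (tendsto_const_div_atTop_nhds_zero_nat c).add
      (tendsto_const_nhds (x := (1:ℝ)))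
  have h2 := (Real.continuousAt_log one_ne_zero).tendsto.comp h1
  rw [Real.log_one] at h2
  apply h2.congr'
  filter_upwards [tendsto_natCast_atTop_atTop.eventually (eventually_gt_atTop |c|)]
    with n hn
  have hn0 : (0:ℝ) < n := (abs_nonneg c).trans_lt hn
  have hcn : (0:ℝ) < c + n := by
    have := neg_abs_le c; linarith
  have h3 : c / n + 1 = (c + n) / n := by field_simp
  simp only [Function.comp_apply]
  rw [h3, Real.log_div hcn.ne' hn0.ne']

lemma tendsto_tail {a b : ℝ} (ha : 0 < a) (hb : 0 < b) :
    Tendsto (fun n : ℕ => ψ (a + n) - ψ (b + n)) atTop (𝓝 0) := by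
  have hlow : Tendsto (fun n : ℕ =>
      (Real.log ((a-1) + n) - Real.log n) - (Real.log (b + n) - Real.log n))
      atTop (𝓝 0) := by
    simpa using (tendsto_log_add_sub (a-1)).sub (tendsto_log_add_sub b)
  have hup : Tendsto (fun n : ℕ =>
      (Real.log (a + n) - Real.log n) - (Real.log ((b-1) + n) - Real.log n))
      atTop (𝓝 0) := by
    simpa using (tendsto_log_add_sub a).sub (tendsto_log_add_sub (b-1))
  apply tendsto_of_tendsto_of_tendsto_of_le_of_le' hlow hup
  · filter_upwards [eventually_ge_atTop 1] with n hn
    have hn1 : (1:ℝ) ≤ n := by exact_mod_cast hn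
    have h1 : 0 < a + n - 1 := by linarith
    have h2 : ψ (b + n) ≤ Real.log (b + n) := ψ_le_log (by positivity)
    have h3 : Real.log (a + n - 1) ≤ ψ (a + n) := by
      have := log_le_ψ h1
      rwa [sub_add_cancel] at this
    have h4 : (a-1) + (n:ℝ) = a + n - 1 := by ring
    rw [h4]
    linarith
  · filter_upwards [eventually_ge_atTop 1] with n hn
    have hn1 : (1:ℝ) ≤ n := by exact_mod_cast hn
    have h1 : 0 < b + n - 1 := by linarith
    have h2 : ψ (a + n) ≤ Real.log (a + n) := ψ_le_log (by positivity)
    have h3 : Real.log (b + n - 1) ≤ ψ (b + n) := by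
      have := log_le_ψ h1
      rwa [sub_add_cancel] at this
    have h4 : (b-1) + (n:ℝ) = b + n - 1 := by ring
    rw [h4]
    linarith

lemma summable_inv_sq (c : ℝ) (hc : 0 < c) : Summable (fun k : ℕ => 1 / (c + k) ^ 2) := by
  have h0 : Summable (fun n : ℕ => 1 / ((n : ℝ) + 1) ^ 2) := by
    have := (summable_nat_add_iff (f := fun n : ℕ => 1 / (n : ℝ) ^ 2) 1).mpr
      (summable_one_div_nat_pow.mpr one_lt_two)
    simpa using this
  have hm : 0 < min c 1 := lt_min hc one_pos
  refine ((h0.mul_left ((1 / min c 1) ^ 2))).of_nonneg_of_le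
    (fun k => by positivity) (fun k => ?_)
  have hk : (0:ℝ) ≤ k := Nat.cast_nonneg k
  have h1 : min c 1 * ((k : ℝ) + 1) ≤ c + k := by
    have h2 : min c 1 ≤ c := min_le_left _ _
    have h3 : min c 1 ≤ 1 := min_le_right _ _
    nlinarith
  calc 1 / (c + k) ^ 2 ≤ 1 / (min c 1 * ((k:ℝ) + 1)) ^ 2 := by
        apply one_div_le_one_div_of_le (by positivity)
        exact pow_le_pow_left₀ (by positivity) h1 2
    _ = (1 / min c 1) ^ 2 * (1 / ((k:ℝ) + 1) ^ 2) := by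
        rw [mul_pow, div_pow, one_pow, div_mul_div_comm, one_mul]

lemma hasSum_ψ_sub (a b : ℝ) (ha : 0 < a) (hb : 0 < b) :
    HasSum (fun k : ℕ => 1 / (a + k) - 1 / (b + k)) (ψ b - ψ a) := by
  have hsum : Summable (fun k : ℕ => 1 / (a + k) - 1 / (b + k)) := by
    have habs : Summable (fun k : ℕ => |b - a| * (1 / (min a b + k) ^ 2)) :=
      (summable_inv_sq _ (lt_min ha hb)).mul_left _
    refine Summable.of_abs (habs.of_nonneg_of_le (fun k => abs_nonneg _) (fun k => ?_))
    have hk : (0:ℝ) ≤ k := Nat.cast_nonneg k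
    have hak : (0:ℝ) < a + k := by positivity
    have hbk : (0:ℝ) < b + k := by positivity
    have hrw : 1 / (a + k) - 1 / (b + k) = (b - a) * (1 / ((a + k) * (b + k))) := by
      field_simp
      ring
    rw [hrw, abs_mul, abs_of_nonneg (by positivity : (0:ℝ) ≤ 1 / ((a + k) * (b + k)))]
    apply mul_le_mul_of_nonneg_left ?_ (abs_nonneg _)
    apply one_div_le_one_div_of_le (by positivity)
    have h1 : min a b + (k:ℝ) ≤ a + k := by have := min_le_left a b; linarith
    have h2 : min a b + (k:ℝ) ≤ b + k := by have := min_le_right a b; linarith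
    have h3 : (0:ℝ) < min a b + k := by have := lt_min ha hb; positivity
    nlinarith
  have key : Tendsto (fun n : ℕ => ∑ k ∈ Finset.range n, (1 / (a + k) - 1 / (b + k)))
      atTop (𝓝 (ψ b - ψ a)) := by
    have heq : ∀ n : ℕ, ∑ k ∈ Finset.range n, (1 / (a + k) - 1 / (b + k))
        = (ψ b - ψ a) + (ψ (a + n) - ψ (b + n)) := by
      intro n
      rw [Finset.sum_sub_distrib]
      have h1 := ψ_add_nat ha n
      have h2 := ψ_add_nat hb n
      linarith
    simp only [heq]
    simpa using tendsto_const_nhds.add (tendsto_tail ha hb)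
  have hs := hsum.hasSum
  rwa [tendsto_nhds_unique hs.tendsto_sum_nat key] at hs

lemma hasDerivAt_ψ {x : ℝ} (hx : 0 < x) :
    HasDerivAt ψ (∑' k : ℕ, 1 / (x + k) ^ 2) x := by
  have hx2 : 0 < x / 2 := by positivity
  have hxt : x ∈ Ioi (x / 2) := by simp [mem_Ioi]; linarith
  have hg : HasDerivAt (fun y => ∑' k : ℕ, (1 / (x + k) - 1 / (y + k)))
      (∑' k : ℕ, 1 / (x + k) ^ 2) x := by
    have := hasDerivAt_tsum_of_isPreconnected
      (u := fun k : ℕ => 1 / (x / 2 + k) ^ 2)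
      (g := fun (k : ℕ) (y : ℝ) => 1 / (x + k) - 1 / (y + k))
      (g' := fun (k : ℕ) (y : ℝ) => 1 / (y + k) ^ 2)
      (summable_inv_sq _ hx2) isOpen_Ioi (convex_Ioi _).isPreconnected
      ?_ ?_ hxt ?_ hxt
    · exact this
    · intro k y hy
      have hy0 : 0 < y := lt_trans hx2 hy
      have hyk : (0:ℝ) < y + k := by positivity
      have h1 : HasDerivAt (fun z : ℝ => z + k) 1 y := (hasDerivAt_id y).add_const _
      have h2 := h1.inv hyk.ne'
      have h3 := (hasDerivAt_const y (1 / (x + (k:ℝ)))).sub h2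
      simp only [one_div] at h3 ⊢
      have hval : ((y + (k:ℝ)) ^ 2)⁻¹ = 0 - -1 / (y + (k:ℝ)) ^ 2 := by ring
      rw [hval]
      exact h3
    · intro k y hy
      have hy2 : x / 2 < y := hy
      have hk : (0:ℝ) ≤ k := Nat.cast_nonneg k
      rw [Real.norm_eq_abs, abs_of_nonneg (by positivity)]
      apply one_div_le_one_div_of_le (by positivity)
      nlinarith
    · simpa using summable_zero
  have hev : ψ =ᶠ[𝓝 x] (fun y => ψ x + ∑' k : ℕ, (1 / (x + k) - 1 / (y + k))) := by
    filter_upwards [eventually_gt_nhds (show x / 2 < x by linarith)] with y hy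
    have hy0 : 0 < y := lt_trans hx2 hy
    have := (hasSum_ψ_sub x y hx hy0).tsum_eq
    rw [this]; ring
  have hfinal := ((hasDerivAt_const x (ψ x)).add hg).congr_of_eventuallyEq hev
  simpa using hfinal

end DigammaAux

open DigammaAux in
/-- Strict concavity inequality for the digamma function `ψ(x) = d/dx log Γ(x)`:
for `x > 0` and `σ ∈ (0,1)`, `ψ(x + σ) < ψ(x) + σ ψ'(x)`. -/
theorem digamma_strict_concavity (x σ : ℝ) (hx : 0 < x) (hσ : σ ∈ Set.Ioo (0 : ℝ) 1) :
    deriv (fun t : ℝ => Real.log (Real.Gamma t)) (x + σ) <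
      deriv (fun t : ℝ => Real.log (Real.Gamma t)) x +
        σ * deriv (deriv (fun t : ℝ => Real.log (Real.Gamma t))) x := by
  obtain ⟨hσ0, hσ1⟩ := hσ
  have hxσ : 0 < x + σ := by linarith
  show ψ (x + σ) < ψ x + σ * deriv ψ x
  have hsum := hasSum_ψ_sub x (x + σ) hx hxσ
  have h1 : ψ (x + σ) - ψ x = ∑' k : ℕ, (1 / (x + k) - 1 / (x + σ + k)) := hsum.tsum_eq.symm
  have hψ' : deriv ψ x = ∑' k : ℕ, 1 / (x + k) ^ 2 := (hasDerivAt_ψ hx).deriv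
  rw [hψ']
  have h2 : Summable (fun k : ℕ => σ * (1 / (x + k) ^ 2)) := (summable_inv_sq x hx).mul_left σ
  have h3 : ∑' k : ℕ, (1 / (x + k) - 1 / (x + σ + k)) < ∑' k : ℕ, σ * (1 / (x + k) ^ 2) := by
    apply Summable.tsum_lt_tsum_of_nonneg (i := 0)
    · intro k
      have hk : (0:ℝ) ≤ k := Nat.cast_nonneg k
      have hak : (0:ℝ) < x + k := by positivity
      have : 1 / (x + σ + k) ≤ 1 / (x + k) :=
        one_div_le_one_div_of_le hak (by linarith)
      linarith
    · intro k
      have hk : (0:ℝ) ≤ k := Nat.cast_nonneg k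
      have hak : (0:ℝ) < x + k := by positivity
      have hbk : (0:ℝ) < x + σ + k := by linarith
      have hrw : 1 / (x + k) - 1 / (x + σ + k) = σ * (1 / ((x + k) * (x + σ + k))) := by
        field_simp; try ring
      rw [hrw]
      apply mul_le_mul_of_nonneg_left ?_ hσ0.le
      apply one_div_le_one_div_of_le (by positivity)
      nlinarith
    · simp only [Nat.cast_zero, add_zero]
      have hrw : 1 / x - 1 / (x + σ) = σ * (1 / (x * (x + σ))) := by
        field_simp; try ring
      rw [hrw]
      apply mul_lt_mul_of_pos_left ?_ hσ0
      apply one_div_lt_one_div_of_lt (by positivity)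
      nlinarith
    · exact h2
  have h4 : ∑' k : ℕ, σ * (1 / (x + k) ^ 2) = σ * ∑' k : ℕ, 1 / (x + k) ^ 2 := tsum_mul_left
  linarith [h1, h3, h4]
end

section
/- For all real numbers s > 0 and φ > 0, the following integral identity holds: ∫₀¹ z⁻¹ · (Γ(φ))⁻¹ (s/z)^{φ−1} e^{−s/z} · z⁻¹ (1−z)^{φ−1} dz = s⁻¹ e^{−s}. (Hence a Compound Random Measure with Gamma(φ,1)-distributed scores and beta directing Lévy measure ν*(dz) = z⁻¹(1−z)^{φ−1} dz on (0,1) has gamma-process marginal Lévy intensities, so its normalized marginals are Dirichlet processes.) -/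
open MeasureTheory Real

/-- A Compound Random Measure with Gamma(φ,1)-distributed scores and beta directing Lévy
measure `ν*(dz) = z⁻¹(1-z)^{φ-1} dz` on (0,1) has gamma-process marginal Lévy intensities. -/
theorem corm_gamma_beta_marginal_intensity (s φ : ℝ) (hs : 0 < s) (hφ : 0 < φ) :
    ∫ z in Set.Ioo (0 : ℝ) 1,
        z⁻¹ * ((Real.Gamma φ)⁻¹ * (s / z) ^ (φ - 1) * Real.exp (-(s / z))) *
          (z⁻¹ * (1 - z) ^ (φ - 1)) =
      s⁻¹ * Real.exp (-s) := by
  have hΓ : Real.Gamma φ = ∫ x in Set.Ioi (0:ℝ), Real.exp (-x) * x ^ (φ - 1) :=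
    Real.Gamma_eq_integral hφ
  set f : ℝ → ℝ := fun z => s / z - s with hf
  set g : ℝ → ℝ := fun t =>
    (Real.Gamma φ)⁻¹ * s⁻¹ * Real.exp (-s) * (Real.exp (-t) * t ^ (φ - 1)) with hg
  have himg : f '' Set.Ioo 0 1 = Set.Ioi 0 := by
    ext t
    constructor
    · rintro ⟨z, ⟨hz0, hz1⟩, rfl⟩
      simp only [hf, Set.mem_Ioi]
      have h1 : s < s / z := by
        rw [lt_div_iff₀ hz0]; nlinarith
      linarith
    · intro ht
      rw [Set.mem_Ioi] at ht
      have hts : 0 < t + s := by linarith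
      refine ⟨s / (t + s), ⟨div_pos hs hts, ?_⟩, ?_⟩
      · rw [div_lt_one hts]; linarith
      · simp only [hf]
        field_simp
        ring
  have hderiv : ∀ z ∈ Set.Ioo (0:ℝ) 1,
      HasDerivWithinAt f (-s / z ^ 2) (Set.Ioo 0 1) z := by
    intro z hz
    have hz0 : z ≠ 0 := ne_of_gt hz.1
    have : HasDerivAt (fun y : ℝ => s / y - s) (-s / z ^ 2) z := by
      have h1 : HasDerivAt (fun y : ℝ => y⁻¹) (-(z ^ 2)⁻¹) z := hasDerivAt_inv hz0
      have h2 := (h1.const_mul s).sub_const s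
      have h3 : (fun y : ℝ => s * y⁻¹ - s) = fun y : ℝ => s / y - s := by
        funext y; rw [div_eq_mul_inv]
      rw [h3] at h2
      rw [show (-s / z ^ 2) = s * -(z ^ 2)⁻¹ by ring]
      exact h2
    exact this.hasDerivWithinAt
  have hinj : Set.InjOn f (Set.Ioo 0 1) := by
    intro a ha b hb hab
    simp only [hf, sub_left_inj] at hab
    rw [div_eq_div_iff (ne_of_gt ha.1) (ne_of_gt hb.1)] at hab
    exact (mul_left_cancel₀ (ne_of_gt hs) hab).symm
  have key := integral_image_eq_integral_abs_deriv_smul measurableSet_Ioo hderiv hinj g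
  rw [himg] at key
  have hLHS : ∫ z in Set.Ioo (0 : ℝ) 1,
      z⁻¹ * ((Real.Gamma φ)⁻¹ * (s / z) ^ (φ - 1) * Real.exp (-(s / z))) *
        (z⁻¹ * (1 - z) ^ (φ - 1)) =
      ∫ z in Set.Ioo (0:ℝ) 1, |(-s / z ^ 2)| • g (f z) := by
    apply setIntegral_congr_fun measurableSet_Ioo
    intro z hz
    obtain ⟨hz0, hz1⟩ := hz
    have hsz : 0 ≤ s / z := le_of_lt (div_pos hs hz0)
    have h1z : 0 ≤ 1 - z := by linarith
    have habs : |(-s / z ^ 2)| = s / z ^ 2 := by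
      rw [abs_div, abs_neg, abs_of_pos hs, abs_of_pos (pow_pos hz0 2)]
    have hfz : f z = (s / z) * (1 - z) := by
      simp only [hf]; field_simp
    have hexp : Real.exp (-f z) * Real.exp (-s) = Real.exp (-(s / z)) := by
      rw [← Real.exp_add]
      congr 1
      simp only [hf]; ring
    simp only [hg, smul_eq_mul, habs, hfz, Real.mul_rpow hsz h1z]
    rw [show (Real.Gamma φ)⁻¹ * s⁻¹ * Real.exp (-s) *
        (Real.exp (-(s / z * (1 - z))) * ((s / z) ^ (φ - 1) * (1 - z) ^ (φ - 1)))
        = (Real.Gamma φ)⁻¹ * s⁻¹ *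
          (Real.exp (-(s / z * (1 - z))) * Real.exp (-s)) *
          ((s / z) ^ (φ - 1) * (1 - z) ^ (φ - 1)) by ring]
    rw [← hfz, hexp]
    field_simp
  rw [hLHS, ← key]
  simp only [hg]
  rw [MeasureTheory.integral_const_mul, ← hΓ]
  field_simp
end
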